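/- Neither the family of behaviors of spliffers nor the family of behaviors of deterministic splitters is closed under intersection: over the alphabet A = {a,b} (a ≠ b), there exist two deterministic splitters S₁ and S₂ with finitely many states (with behaviors L₁ = {(aⁿbaᵐ, aᵐbaˢ, aⁿba^{2m}baˢ) : n,m,s > 0} and L₂ = {(aⁱbaʲ, aᵏbaⁱ, aᵏba^{2i}baʲ) : i,j,k > 0}) such that |S₁| ∩ |S₂| = {(aˢbaˢ, aˢbaˢ, aˢba^{2s}baˢ) : s > 0} is not the behavior of any spliffer with finitely many states. -/

import Mathlib

/-- Words over the alphabet `A`, i.e. elements of the free monoid `A*`. -/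
abbrev Word (A : Type) := List A

/-- The generating set `G = {(a,ε,a) : a ∈ A} ∪ {(ε,a,a) : a ∈ A}` of the
Shuffling Monoid. -/
def genG (A : Type) : Set (Word A × Word A × Word A) :=
  {g | ∃ a : A, g = ([a], [], [a]) ∨ g = ([], [a], [a])}

/-- Componentwise product (concatenation) of a list of triples of words. -/
def prodTriple {A : Type} (ls : List (Word A × Word A × Word A)) :
    Word A × Word A × Word A :=
  ((ls.map fun l => l.1).flatten, (ls.map fun l => l.2.1).flatten,
    (ls.map fun l => l.2.2).flatten)

/-- The Shuffling Monoid `U`: the submonoid of `A* × A* × A*` generated by `G`,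
described as the set of all products of finite sequences of generators. -/
def shuffleU (A : Type) : Set (Word A × Word A × Word A) :=
  {m | ∃ ls : List (Word A × Word A × Word A), (∀ l ∈ ls, l ∈ genG A) ∧ prodTriple ls = m}

/-- A spliffer (equivalently, splitter) over `A`: a finite automaton whose
transitions are labeled by elements of `G`. -/
structure Spliffer (A : Type) where
  Q : Type
  finQ : Finite Q
  E : Q → (Word A × Word A × Word A) → Q → Prop
  I : Set Q
  T : Set Q
  labels_mem : ∀ {q l q'}, E q l q' → l ∈ genG A

/-- Paths in a spliffer, recording the sequence of labels. -/
inductive Spliffer.Path {A : Type} (S : Spliffer A) :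
    S.Q → List (Word A × Word A × Word A) → S.Q → Prop
  | nil (q : S.Q) : Spliffer.Path S q [] q
  | cons {q q' q'' : S.Q} {l : Word A × Word A × Word A}
      {ls : List (Word A × Word A × Word A)} :
      S.E q l q' → Spliffer.Path S q' ls q'' → Spliffer.Path S q (l :: ls) q''

/-- The behavior `|S|` of a spliffer: products of the label sequences of all
successful runs. -/
def Spliffer.behavior {A : Type} (S : Spliffer A) : Set (Word A × Word A × Word A) :=
  {m | ∃ q ∈ S.I, ∃ q' ∈ S.T, ∃ ls, S.Path q ls q' ∧ prodTriple ls = m}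

/-- A splitter is deterministic if it has a single initial state, for every state
and input letter there is at most one outgoing transition reading that letter,
and all transitions leaving a given state write to the same tape. -/
def Spliffer.Deterministic {A : Type} (S : Spliffer A) : Prop :=
  (∃! i, i ∈ S.I) ∧
  (∀ ⦃q l₁ q₁ l₂ q₂⦄, S.E q l₁ q₁ → S.E q l₂ q₂ → l₁.2.2 = l₂.2.2 → l₁ = l₂ ∧ q₁ = q₂) ∧
  (∀ ⦃q l₁ q₁ l₂ q₂⦄, S.E q l₁ q₁ → S.E q l₂ q₂ →
    (l₁.1 = [] ∧ l₂.1 = []) ∨ (l₁.2.1 = [] ∧ l₂.2.1 = []))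

/-- The set `L₁ = {(aⁿbaᵐ, aᵐbaˢ, aⁿba^{2m}baˢ) : n,m,s > 0}`. -/
def setL1 {A : Type} (a b : A) : Set (Word A × Word A × Word A) :=
  {x | ∃ n m s : ℕ, 0 < n ∧ 0 < m ∧ 0 < s ∧
    x = (List.replicate n a ++ [b] ++ List.replicate m a,
         List.replicate m a ++ [b] ++ List.replicate s a,
         List.replicate n a ++ [b] ++ List.replicate (2 * m) a ++ [b] ++
           List.replicate s a)}

/-- The set `L₂ = {(aⁱbaʲ, aᵏbaⁱ, aᵏba^{2i}baʲ) : i,j,k > 0}`. -/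
def setL2 {A : Type} (a b : A) : Set (Word A × Word A × Word A) :=
  {x | ∃ i j k : ℕ, 0 < i ∧ 0 < j ∧ 0 < k ∧
    x = (List.replicate i a ++ [b] ++ List.replicate j a,
         List.replicate k a ++ [b] ++ List.replicate i a,
         List.replicate k a ++ [b] ++ List.replicate (2 * i) a ++ [b] ++
           List.replicate j a)}

/-- The set `{(aˢbaˢ, aˢbaˢ, aˢba^{2s}baˢ) : s > 0}`. -/
def setLcap {A : Type} (a b : A) : Set (Word A × Word A × Word A) :=
  {x | ∃ s : ℕ, 0 < s ∧
    x = (List.replicate s a ++ [b] ++ List.replicate s a,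
         List.replicate s a ++ [b] ++ List.replicate s a,
         List.replicate s a ++ [b] ++ List.replicate (2 * s) a ++ [b] ++
           List.replicate s a)}

namespace SpliffAux

open List

variable {A : Type}

@[simp] lemma prodTriple_nil : prodTriple ([] : List (Word A × Word A × Word A)) = ([], [], []) := rfl

lemma prodTriple_cons (l : Word A × Word A × Word A) (ls : List (Word A × Word A × Word A)) :
    prodTriple (l :: ls) = (l.1 ++ (prodTriple ls).1, l.2.1 ++ (prodTriple ls).2.1,
      l.2.2 ++ (prodTriple ls).2.2) := by
  simp [prodTriple]

lemma prodTriple_append (l₁ l₂ : List (Word A × Word A × Word A)) :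
    prodTriple (l₁ ++ l₂) = ((prodTriple l₁).1 ++ (prodTriple l₂).1,
      (prodTriple l₁).2.1 ++ (prodTriple l₂).2.1,
      (prodTriple l₁).2.2 ++ (prodTriple l₂).2.2) := by
  simp [prodTriple]

lemma path_append {S : Spliffer A} {q q' q'' : S.Q} {ls₁ ls₂} (h₁ : S.Path q ls₁ q')
    (h₂ : S.Path q' ls₂ q'') : S.Path q (ls₁ ++ ls₂) q'' := by
  induction h₁ with
  | nil => exact h₂
  | cons e _ ih => exact Spliffer.Path.cons e (ih h₂)

lemma path_labels {S : Spliffer A} {q q' : S.Q} {ls} (h : S.Path q ls q') :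
    ∀ l ∈ ls, l ∈ genG A := by
  induction h with
  | nil => simp
  | cons e _ ih =>
    intro l hl
    cases hl with
    | head => exact S.labels_mem e
    | tail _ hl => exact ih _ hl

lemma rep_b_split {a b : A} (hab : a ≠ b) :
    ∀ p q (u v : Word A), List.replicate p a ++ b :: u = List.replicate q a ++ b :: v →
      p = q ∧ u = v := by
  intro p
  induction p with
  | zero =>
    intro q u v h
    cases q with
    | zero => simpa using h
    | succ q => simp [List.replicate_succ] at h; exact absurd h.1.symm hab
  | succ p ih =>
    intro q u v h
    cases q with
    | zero => simp [List.replicate_succ] at h; exact absurd h.1 hab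
    | succ q =>
      simp only [List.replicate_succ, List.cons_append, List.cons.injEq] at h
      obtain ⟨hp, hu⟩ := ih q u v h.2
      exact ⟨by omega, hu⟩

lemma flatten_len_singles {g : (Word A × Word A × Word A) → Word A}
    (ls : List (Word A × Word A × Word A)) (h : ∀ l ∈ ls, (g l).length = 1) :
    ((ls.map g).flatten).length = ls.length := by
  induction ls with
  | nil => simp
  | cons l ls ih =>
    simp only [List.map_cons, List.flatten_cons, List.length_append, List.length_cons]
    rw [h l (by simp), ih (fun x hx => h x (by simp [hx]))]
    omega

/-- states along a path, with splicing. -/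
lemma path_states {S : Spliffer A} {q q' : S.Q} {ls} (h : S.Path q ls q') :
    ∃ f : ℕ → S.Q, f 0 = q ∧ f ls.length = q' ∧
      ∀ i j, i ≤ j → j ≤ ls.length → S.Path (f i) ((ls.drop i).take (j - i)) (f j) := by
  induction h with
  | nil q =>
    refine ⟨fun _ => q, rfl, rfl, ?_⟩
    intro i j hij hj
    simp only [List.length_nil, Nat.le_zero] at hj
    subst hj
    simp only [Nat.le_zero] at hij
    subst hij
    simpa using Spliffer.Path.nil q
  | @cons q q' q'' l ls e p ih =>
    obtain ⟨f, hf0, hfl, hf⟩ := ih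
    refine ⟨fun n => Nat.rec q (fun m _ => f m) n, rfl, by simpa using hfl, ?_⟩
    intro i j hij hj
    match i, j with
    | 0, 0 => simpa using Spliffer.Path.nil q
    | 0, (k+1) =>
      simp only [Nat.sub_zero, List.drop_zero, List.take_succ_cons]
      exact Spliffer.Path.cons e (by simpa [hf0] using hf 0 k (Nat.zero_le _) (by simpa using hj))
    | (m+1), (k+1) =>
      simpa using hf m k (by omega) (by simpa using hj)

end SpliffAux
namespace SpliffAux

inductive St : Type | s0 | s1 | s2 | s3 | s4 | s5 | s6
  deriving DecidableEq

instance : Fintype St :=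
  ⟨{St.s0, St.s1, St.s2, St.s3, St.s4, St.s5, St.s6}, by intro x; cases x <;> simp⟩

def step (a b : A) : St → (Word A × Word A × Word A) → St → Prop := fun q l q' =>
  (q = .s0 ∧ q' = .s1 ∧ l = ([a], [], [a])) ∨
  (q = .s1 ∧ q' = .s1 ∧ l = ([a], [], [a])) ∨
  (q = .s1 ∧ q' = .s2 ∧ l = ([b], [], [b])) ∨
  (q = .s2 ∧ q' = .s3 ∧ l = ([], [a], [a])) ∨
  (q = .s3 ∧ q' = .s4 ∧ l = ([a], [], [a])) ∨
  (q = .s4 ∧ q' = .s3 ∧ l = ([], [a], [a])) ∨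
  (q = .s4 ∧ q' = .s5 ∧ l = ([], [b], [b])) ∨
  (q = .s5 ∧ q' = .s6 ∧ l = ([], [a], [a])) ∨
  (q = .s6 ∧ q' = .s6 ∧ l = ([], [a], [a]))

def Sone (a b : A) : Spliffer A where
  Q := St
  finQ := inferInstance
  E := step a b
  I := {St.s0}
  T := {St.s6}
  labels_mem := by
    intro q l q' h
    rcases h with ⟨_,_,rfl⟩|⟨_,_,rfl⟩|⟨_,_,rfl⟩|⟨_,_,rfl⟩|⟨_,_,rfl⟩|⟨_,_,rfl⟩|⟨_,_,rfl⟩|⟨_,_,rfl⟩|⟨_,_,rfl⟩ <;>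
      first
        | exact ⟨a, Or.inl rfl⟩ | exact ⟨a, Or.inr rfl⟩
        | exact ⟨b, Or.inl rfl⟩ | exact ⟨b, Or.inr rfl⟩

lemma Sone_det {a b : A} (hab : a ≠ b) : (Sone a b).Deterministic := by
  refine ⟨⟨St.s0, rfl, fun y hy => hy⟩, ?_, ?_⟩
  · intro q l₁ q₁ l₂ q₂ h1 h2 heq
    rcases h1 with ⟨rfl,rfl,rfl⟩|⟨rfl,rfl,rfl⟩|⟨rfl,rfl,rfl⟩|⟨rfl,rfl,rfl⟩|⟨rfl,rfl,rfl⟩|⟨rfl,rfl,rfl⟩|⟨rfl,rfl,rfl⟩|⟨rfl,rfl,rfl⟩|⟨rfl,rfl,rfl⟩ <;>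
      rcases h2 with ⟨h,rfl,rfl⟩|⟨h,rfl,rfl⟩|⟨h,rfl,rfl⟩|⟨h,rfl,rfl⟩|⟨h,rfl,rfl⟩|⟨h,rfl,rfl⟩|⟨h,rfl,rfl⟩|⟨h,rfl,rfl⟩|⟨h,rfl,rfl⟩ <;>
      simp_all
    all_goals rfl
  · intro q l₁ q₁ l₂ q₂ h1 h2
    rcases h1 with ⟨rfl,rfl,rfl⟩|⟨rfl,rfl,rfl⟩|⟨rfl,rfl,rfl⟩|⟨rfl,rfl,rfl⟩|⟨rfl,rfl,rfl⟩|⟨rfl,rfl,rfl⟩|⟨rfl,rfl,rfl⟩|⟨rfl,rfl,rfl⟩|⟨rfl,rfl,rfl⟩ <;>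
      rcases h2 with ⟨h,rfl,rfl⟩|⟨h,rfl,rfl⟩|⟨h,rfl,rfl⟩|⟨h,rfl,rfl⟩|⟨h,rfl,rfl⟩|⟨h,rfl,rfl⟩|⟨h,rfl,rfl⟩|⟨h,rfl,rfl⟩|⟨h,rfl,rfl⟩ <;>
      simp_all

end SpliffAux
namespace SpliffAux

open List

variable {A : Type}

def w1 (c : A) : Word A × Word A × Word A := ([c], [], [c])
def w2 (c : A) : Word A × Word A × Word A := ([], [c], [c])

lemma rep_two_succ (a : A) (m : ℕ) :
    replicate (2 * (m + 1)) a = a :: a :: replicate (2 * m) a := by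
  rw [show 2 * (m + 1) = (2 * m + 1) + 1 by ring]
  simp [replicate_succ]

/-- language accepted from each state of `Sone`. -/
def lang (a b : A) : St → (Word A × Word A × Word A) → Prop
  | .s6 => fun x => ∃ t, x = ([], replicate t a, replicate t a)
  | .s5 => fun x => ∃ t, 0 < t ∧ x = ([], replicate t a, replicate t a)
  | .s4 => fun x => ∃ m t, 0 < t ∧
      x = (replicate m a, replicate m a ++ b :: replicate t a,
           replicate (2 * m) a ++ b :: replicate t a)
  | .s3 => fun x => ∃ m t, 0 < t ∧
      x = (replicate (m + 1) a, replicate m a ++ b :: replicate t a,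
           replicate (2 * m + 1) a ++ b :: replicate t a)
  | .s2 => fun x => ∃ m t, 0 < m ∧ 0 < t ∧
      x = (replicate m a, replicate m a ++ b :: replicate t a,
           replicate (2 * m) a ++ b :: replicate t a)
  | .s1 => fun x => ∃ u m t, 0 < m ∧ 0 < t ∧
      x = (replicate u a ++ b :: replicate m a, replicate m a ++ b :: replicate t a,
           replicate u a ++ b :: (replicate (2 * m) a ++ b :: replicate t a))
  | .s0 => fun x => ∃ n m t, 0 < n ∧ 0 < m ∧ 0 < t ∧
      x = (replicate n a ++ b :: replicate m a, replicate m a ++ b :: replicate t a,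
           replicate n a ++ b :: (replicate (2 * m) a ++ b :: replicate t a))

lemma lang_of_path {a b : A} :
    ∀ {q ls q'}, (Sone a b).Path q ls q' → q' = St.s6 → lang a b q (prodTriple ls) := by
  intro q ls q' h
  induction h with
  | nil q => rintro rfl; exact ⟨0, rfl⟩
  | @cons q q' q'' l ls e p ih =>
    intro h6
    have IH := ih h6
    clear ih p h6
    rw [prodTriple_cons]
    rcases e with ⟨rfl,rfl,rfl⟩|⟨rfl,rfl,rfl⟩|⟨rfl,rfl,rfl⟩|⟨rfl,rfl,rfl⟩|⟨rfl,rfl,rfl⟩|⟨rfl,rfl,rfl⟩|⟨rfl,rfl,rfl⟩|⟨rfl,rfl,rfl⟩|⟨rfl,rfl,rfl⟩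
    · -- s0 → s1
      obtain ⟨u, m, t, hm, ht, hx⟩ := IH
      exact ⟨u + 1, m, t, Nat.succ_pos _, hm, ht, by simp [hx, replicate_succ]⟩
    · -- s1 → s1
      obtain ⟨u, m, t, hm, ht, hx⟩ := IH
      exact ⟨u + 1, m, t, hm, ht, by simp [hx, replicate_succ]⟩
    · -- s1 → s2
      obtain ⟨m, t, hm, ht, hx⟩ := IH
      exact ⟨0, m, t, hm, ht, by simp [hx]⟩
    · -- s2 → s3
      obtain ⟨m, t, ht, hx⟩ := IH
      exact ⟨m + 1, t, Nat.succ_pos _, ht, by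
        simp [hx, replicate_succ, rep_two_succ]⟩
    · -- s3 → s4
      obtain ⟨m, t, ht, hx⟩ := IH
      exact ⟨m, t, ht, by simp [hx, replicate_succ]⟩
    · -- s4 → s3
      obtain ⟨m, t, ht, hx⟩ := IH
      exact ⟨m + 1, t, ht, by simp [hx, replicate_succ, rep_two_succ]⟩
    · -- s4 → s5
      obtain ⟨t, ht, hx⟩ := IH
      exact ⟨0, t, ht, by simp [hx]⟩
    · -- s5 → s6
      obtain ⟨t, hx⟩ := IH
      exact ⟨t + 1, Nat.succ_pos _, by simp [hx, replicate_succ]⟩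
    · -- s6 → s6
      obtain ⟨t, hx⟩ := IH
      exact ⟨t + 1, by simp [hx, replicate_succ]⟩

/-- the alternating block of `m` pairs, a loop at state `s4`. -/
def pairBlock (a : A) : ℕ → List (Word A × Word A × Word A)
  | 0 => []
  | m + 1 => w2 a :: w1 a :: pairBlock a m

lemma path_pairBlock {a b : A} : ∀ m, (Sone a b).Path St.s4 (pairBlock a m) St.s4
  | 0 => Spliffer.Path.nil _
  | m + 1 =>
    Spliffer.Path.cons (q' := St.s3)
      (Or.inr (Or.inr (Or.inr (Or.inr (Or.inr (Or.inl ⟨rfl, rfl, rfl⟩))))))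
      (Spliffer.Path.cons (q' := St.s4)
        (Or.inr (Or.inr (Or.inr (Or.inr (Or.inl ⟨rfl, rfl, rfl⟩)))))
        (path_pairBlock m))

lemma prodTriple_pairBlock (a : A) : ∀ m, prodTriple (pairBlock a m) =
    (replicate m a, replicate m a, replicate (2 * m) a)
  | 0 => rfl
  | m + 1 => by
    rw [pairBlock, prodTriple_cons, prodTriple_cons, prodTriple_pairBlock a m, rep_two_succ]
    simp [w1, w2, replicate_succ]

lemma path_rep1 {a b : A} : ∀ n, (Sone a b).Path St.s1 (replicate n (w1 a)) St.s1
  | 0 => Spliffer.Path.nil _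
  | n + 1 => by
    rw [replicate_succ]
    exact Spliffer.Path.cons (Or.inr (Or.inl ⟨rfl, rfl, rfl⟩)) (path_rep1 n)

lemma path_rep6 {a b : A} : ∀ n, (Sone a b).Path St.s6 (replicate n (w2 a)) St.s6
  | 0 => Spliffer.Path.nil _
  | n + 1 => by
    rw [replicate_succ]
    exact Spliffer.Path.cons (Or.inr (Or.inr (Or.inr (Or.inr (Or.inr (Or.inr (Or.inr (Or.inr
      ⟨rfl, rfl, rfl⟩)))))))) (path_rep6 n)

lemma prodTriple_rep1 (a : A) : ∀ n, prodTriple (replicate n (([a], [], [a]) :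
    Word A × Word A × Word A)) = (replicate n a, [], replicate n a)
  | 0 => rfl
  | n + 1 => by
    rw [replicate_succ, prodTriple_cons, prodTriple_rep1 a n]
    simp [replicate_succ]

lemma prodTriple_rep2 (a : A) : ∀ n, prodTriple (replicate n (([], [a], [a]) :
    Word A × Word A × Word A)) = ([], replicate n a, replicate n a)
  | 0 => rfl
  | n + 1 => by
    rw [replicate_succ, prodTriple_cons, prodTriple_rep2 a n]
    simp [replicate_succ]

lemma Sone_behavior {a b : A} : (Sone a b).behavior = setL1 a b := by
  ext x
  constructor
  · rintro ⟨q, hq, q', hq', ls, hpath, rfl⟩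
    have hq0 : q = St.s0 := hq
    have hq6 : q' = St.s6 := hq'
    subst hq0
    obtain ⟨n, m, t, hn, hm, ht, hx⟩ := lang_of_path hpath hq6
    exact ⟨n, m, t, hn, hm, ht, by simp [hx, setL1]⟩
  · rintro ⟨n, m, t, hn, hm, ht, rfl⟩
    obtain ⟨n', rfl⟩ : ∃ n', n = n' + 1 := ⟨n - 1, by omega⟩
    obtain ⟨m', rfl⟩ : ∃ m', m = m' + 1 := ⟨m - 1, by omega⟩
    obtain ⟨t', rfl⟩ : ∃ t', t = t' + 1 := ⟨t - 1, by omega⟩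
    refine ⟨St.s0, rfl, St.s6, rfl,
      [w1 a] ++ replicate n' (w1 a) ++ [w1 b] ++ [w2 a, w1 a] ++ pairBlock a m' ++
        [w2 b] ++ [w2 a] ++ replicate t' (w2 a), ?_, ?_⟩
    · refine path_append ?_ (path_rep6 t')
      refine path_append ?_ (Spliffer.Path.cons (q' := St.s6)
        (Or.inr (Or.inr (Or.inr (Or.inr (Or.inr (Or.inr (Or.inr (Or.inl ⟨rfl, rfl, rfl⟩))))))))
        (Spliffer.Path.nil _))
      refine path_append ?_ (Spliffer.Path.cons (q' := St.s5)
        (Or.inr (Or.inr (Or.inr (Or.inr (Or.inr (Or.inr (Or.inl ⟨rfl, rfl, rfl⟩)))))))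
        (Spliffer.Path.nil _))
      refine path_append ?_ (path_pairBlock m')
      refine path_append ?_ (Spliffer.Path.cons (q' := St.s3)
        (Or.inr (Or.inr (Or.inr (Or.inl ⟨rfl, rfl, rfl⟩))))
        (Spliffer.Path.cons (q' := St.s4)
          (Or.inr (Or.inr (Or.inr (Or.inr (Or.inl ⟨rfl, rfl, rfl⟩)))))
          (Spliffer.Path.nil _)))
      refine path_append ?_ (Spliffer.Path.cons (q' := St.s2)
        (Or.inr (Or.inr (Or.inl ⟨rfl, rfl, rfl⟩))) (Spliffer.Path.nil _))
      refine path_append ?_ (path_rep1 n')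
      exact Spliffer.Path.cons (q' := St.s1) (Or.inl ⟨rfl, rfl, rfl⟩) (Spliffer.Path.nil _)
    · simp only [prodTriple_append, prodTriple_cons, prodTriple_nil, prodTriple_rep1,
        prodTriple_rep2, prodTriple_pairBlock, w1, w2]
      simp [replicate_succ, rep_two_succ]

end SpliffAux
namespace SpliffAux

open List

variable {A : Type}

def swapT (x : Word A × Word A × Word A) : Word A × Word A × Word A := (x.2.1, x.1, x.2.2)

@[simp] lemma swapT_swapT (x : Word A × Word A × Word A) : swapT (swapT x) = x := rfl

lemma swapT_mem_genG {l : Word A × Word A × Word A} (h : swapT l ∈ genG A) : l ∈ genG A := by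
  obtain ⟨c, hc | hc⟩ := h
  · exact ⟨c, Or.inr (by
      have h1 : l.2.1 = [c] := congrArg Prod.fst hc
      have h2 : l.1 = [] := congrArg (Prod.fst ∘ Prod.snd) hc
      have h3 : l.2.2 = [c] := congrArg (Prod.snd ∘ Prod.snd) hc
      exact Prod.ext h2 (Prod.ext h1 h3))⟩
  · exact ⟨c, Or.inl (by
      have h1 : l.2.1 = [] := congrArg Prod.fst hc
      have h2 : l.1 = [c] := congrArg (Prod.fst ∘ Prod.snd) hc
      have h3 : l.2.2 = [c] := congrArg (Prod.snd ∘ Prod.snd) hc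
      exact Prod.ext h2 (Prod.ext h1 h3))⟩

/-- the splitter obtained by swapping the first two tapes. -/
def swapS (S : Spliffer A) : Spliffer A where
  Q := S.Q
  finQ := S.finQ
  E := fun q l q' => S.E q (swapT l) q'
  I := S.I
  T := S.T
  labels_mem := fun h => swapT_mem_genG (S.labels_mem h)

lemma swapT_prodTriple (ls : List (Word A × Word A × Word A)) :
    prodTriple (ls.map swapT) = swapT (prodTriple ls) := by
  simp only [prodTriple, swapT, List.map_map, Prod.mk.injEq]
  exact ⟨rfl, rfl, rfl⟩

lemma path_swapS {S : Spliffer A} {q q' : (swapS S).Q} {ls} (h : (swapS S).Path q ls q') :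
    S.Path q (ls.map swapT) q' := by
  induction h with
  | nil q => simpa using Spliffer.Path.nil (S := S) q
  | @cons q q' q'' l ls e _ ih =>
    rw [List.map_cons]
    exact Spliffer.Path.cons (show S.E q (swapT l) q' from e) ih

lemma path_swapS' {S : Spliffer A} {q q' : S.Q} {ls} (h : S.Path q ls q') :
    (swapS S).Path q (ls.map swapT) q' := by
  induction h with
  | nil q => simpa using Spliffer.Path.nil (S := swapS S) q
  | @cons q q' q'' l ls e p ih =>
    rw [List.map_cons]
    exact Spliffer.Path.cons (show (swapS S).E q (swapT l) q' from e) ih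

lemma swapS_behavior (S : Spliffer A) : (swapS S).behavior = swapT ⁻¹' S.behavior := by
  ext x
  constructor
  · rintro ⟨q, hq, q', hq', ls, hp, rfl⟩
    exact ⟨q, hq, q', hq', ls.map swapT, path_swapS hp, swapT_prodTriple ls⟩
  · rintro ⟨q, hq, q', hq', ls, hp, hx⟩
    refine ⟨q, hq, q', hq', ls.map swapT, path_swapS' hp, ?_⟩
    rw [swapT_prodTriple, hx, swapT_swapT]

lemma swapS_det {S : Spliffer A} (h : S.Deterministic) : (swapS S).Deterministic := by
  obtain ⟨h1, h2, h3⟩ := h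
  refine ⟨h1, ?_, ?_⟩
  · intro q l₁ q₁ l₂ q₂ e1 e2 heq
    have := h2 e1 e2 heq
    refine ⟨?_, this.2⟩
    have hl := this.1
    have := congrArg swapT hl
    simpa using this
  · intro q l₁ q₁ l₂ q₂ e1 e2
    rcases h3 e1 e2 with ⟨ha, hb⟩ | ⟨ha, hb⟩
    · exact Or.inr ⟨ha, hb⟩
    · exact Or.inl ⟨ha, hb⟩

lemma Stwo_behavior {a b : A} : (swapS (Sone a b)).behavior = setL2 a b := by
  rw [swapS_behavior, Sone_behavior]
  ext x
  constructor
  · rintro ⟨n, m, s, hn, hm, hs, hx⟩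
    refine ⟨m, s, n, hm, hs, hn, ?_⟩
    have h1 : x.2.1 = replicate n a ++ [b] ++ replicate m a := congrArg Prod.fst hx
    have h2 : x.1 = replicate m a ++ [b] ++ replicate s a := congrArg (Prod.fst ∘ Prod.snd) hx
    have h3 : x.2.2 = replicate n a ++ [b] ++ replicate (2*m) a ++ [b] ++ replicate s a :=
      congrArg (Prod.snd ∘ Prod.snd) hx
    exact Prod.ext h2 (Prod.ext h1 h3)
  · rintro ⟨i, j, k, hi, hj, hk, rfl⟩
    exact ⟨k, i, j, hk, hi, hj, rfl⟩

end SpliffAux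
namespace SpliffAux

open List

variable {A : Type}

lemma rep_inj {a : A} {p q : ℕ} (h : replicate p a = replicate q a) : p = q := by
  have := congrArg List.length h
  simpa using this

lemma L1_inter_L2 {a b : A} (hab : a ≠ b) : setL1 a b ∩ setL2 a b = setLcap a b := by
  ext x
  constructor
  · rintro ⟨⟨n, m, s, hn, hm, hs, hx1⟩, ⟨i, j, k, hi, hj, hk, hx2⟩⟩
    have e1 := congrArg Prod.fst (hx1.symm.trans hx2)
    have e2 := congrArg (Prod.fst ∘ Prod.snd) (hx1.symm.trans hx2)
    have e3 := congrArg (Prod.snd ∘ Prod.snd) (hx1.symm.trans hx2)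
    simp only [Function.comp, append_assoc, singleton_append] at e1 e2 e3
    obtain ⟨hni, hmj⟩ := rep_b_split hab _ _ _ _ e1
    obtain ⟨hmk, hsi⟩ := rep_b_split hab _ _ _ _ e2
    obtain ⟨hnk, e3'⟩ := rep_b_split hab _ _ _ _ e3
    obtain ⟨hmi2, hsj⟩ := rep_b_split hab _ _ _ _ e3'
    have h1 : m = j := rep_inj hmj
    have h2 : s = i := rep_inj hsi
    have h3 : s = j := rep_inj hsj
    refine ⟨m, hm, ?_⟩
    rw [hx1, show n = m by omega, show s = m by omega]
  · rintro ⟨s, hs, rfl⟩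
    exact ⟨⟨s, s, s, hs, hs, hs, rfl⟩, ⟨s, s, s, hs, hs, hs, rfl⟩⟩

lemma no_spliffer_Lcap {a b : A} (hab : a ≠ b) :
    ¬ ∃ S : Spliffer A, S.behavior = setLcap a b := by
  rintro ⟨S, hS⟩
  have : Finite S.Q := S.finQ
  have : Fintype S.Q := Fintype.ofFinite S.Q
  set s := Fintype.card S.Q + 1 with hs_def
  have hs : 0 < s := Nat.succ_pos _
  have hmem : (replicate s a ++ [b] ++ replicate s a,
      replicate s a ++ [b] ++ replicate s a,
      replicate s a ++ [b] ++ replicate (2 * s) a ++ [b] ++ replicate s a) ∈ S.behavior := by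
    rw [hS]; exact ⟨s, hs, rfl⟩
  obtain ⟨q0, hq0, qf, hqf, ls, hpath, hprod⟩ := hmem
  have hl1 : ∀ l ∈ ls, (l.2.2).length = 1 := by
    intro l hl
    obtain ⟨c, h | h⟩ := path_labels hpath l hl <;> simp [h]
  have h3 : ((ls.map fun l => l.2.2).flatten) =
      replicate s a ++ [b] ++ replicate (2 * s) a ++ [b] ++ replicate s a :=
    congrArg (Prod.snd ∘ Prod.snd) hprod
  have hlen : ls.length = 4 * s + 2 := by
    have := flatten_len_singles ls hl1
    rw [h3] at this
    simp at this
    omega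
  obtain ⟨f, hf0, hfl, hf⟩ := path_states hpath
  -- pigeonhole on the first s+1 states
  obtain ⟨i0, j0, hij, hi0, hj0, hfij⟩ :
      ∃ i0 j0 : ℕ, i0 < j0 ∧ i0 < s + 1 ∧ j0 < s + 1 ∧ f i0 = f j0 := by
    obtain ⟨⟨i0, hi0⟩, ⟨j0, hj0⟩, hne, hfe⟩ :=
      Fintype.exists_ne_map_eq_of_card_lt (fun i : Fin (s + 1) => f i)
        (by simp only [Fintype.card_fin]; omega)
    rcases Nat.lt_trichotomy i0 j0 with h | h | h
    · exact ⟨i0, j0, h, hi0, hj0, hfe⟩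
    · exact absurd (Fin.ext h) hne
    · exact ⟨j0, i0, h, hj0, hi0, hfe.symm⟩
  have hj0s : j0 ≤ s := by omega
  have hj0len : j0 ≤ ls.length := by omega
  -- the three path pieces
  set mid := (ls.drop i0).take (j0 - i0) with hmid
  have p1 : S.Path q0 (ls.take i0) (f i0) := by
    have := hf 0 i0 (Nat.zero_le _) (by omega)
    simpa [hf0] using this
  have p2 : S.Path (f i0) mid (f i0) := by
    have := hf i0 j0 (le_of_lt hij) hj0len
    rwa [← hmid, ← hfij] at this
  have p3 : S.Path (f i0) (ls.drop j0) qf := by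
    have := hf j0 ls.length (by omega) le_rfl
    rw [show (ls.drop j0).take (ls.length - j0) = ls.drop j0 by
      apply List.take_of_length_le; simp] at this
    rwa [← hfij, hfl] at this
  have hpump : S.Path q0 (ls.take i0 ++ (mid ++ (mid ++ ls.drop j0))) qf :=
    path_append p1 (path_append p2 (path_append p2 p3))
  have hmem2 : prodTriple (ls.take i0 ++ (mid ++ (mid ++ ls.drop j0))) ∈ setLcap a b := by
    rw [← hS]
    exact ⟨q0, hq0, qf, hqf, _, hpump, rfl⟩
  obtain ⟨t, ht, hform⟩ := hmem2
  -- compute the third component of the pumped product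
  have htakemid : ls.take i0 ++ mid = ls.take j0 := by
    rw [hmid, ← List.take_add, show i0 + (j0 - i0) = j0 by omega]
  have hsplit : ls.take j0 ++ ls.drop j0 = ls := List.take_append_drop _ _
  have hlenT : ((ls.take j0).map fun l => l.2.2).flatten.length = j0 := by
    rw [flatten_len_singles _ (fun l hl => hl1 l (List.mem_of_mem_take hl))]
    simp
    omega
  have heq : ((ls.take j0).map fun l => l.2.2).flatten ++
      ((ls.drop j0).map fun l => l.2.2).flatten =
      replicate s a ++ [b] ++ replicate (2 * s) a ++ [b] ++ replicate s a := by
    rw [← h3, ← List.flatten_append, ← List.map_append, hsplit]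
  have hTM : ((ls.take j0).map fun l => l.2.2).flatten = replicate j0 a := by
    have h' : ((ls.take j0).map fun l => l.2.2).flatten =
        (replicate s a ++ [b] ++ replicate (2 * s) a ++ [b] ++ replicate s a).take j0 := by
      rw [← heq, List.take_append_of_le_length (le_of_eq hlenT.symm),
        List.take_of_length_le (le_of_eq hlenT)]
    rw [h', List.append_assoc, List.append_assoc, List.append_assoc,
      List.take_append_of_le_length (by simpa using hj0s), List.take_replicate,
      Nat.min_eq_left hj0s]
  have hT3 : ((ls.drop j0).map fun l => l.2.2).flatten =
      replicate (s - j0) a ++ ([b] ++ (replicate (2 * s) a ++ ([b] ++ replicate s a))) := by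
    have h' : ((ls.drop j0).map fun l => l.2.2).flatten =
        (replicate s a ++ [b] ++ replicate (2 * s) a ++ [b] ++ replicate s a).drop j0 := by
      rw [← heq, List.drop_append_of_le_length (le_of_eq hlenT.symm),
        List.drop_of_length_le (le_of_eq hlenT), List.nil_append]
    rw [h', List.append_assoc, List.append_assoc, List.append_assoc,
      List.drop_append_of_le_length (by simpa using hj0s), List.drop_replicate]
  have hTMsplit : ((ls.take i0).map fun l => l.2.2).flatten ++
      (mid.map fun l => l.2.2).flatten = replicate j0 a := by
    rw [← List.flatten_append, ← List.map_append, htakemid, hTM]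
  have hlenT1 : ((ls.take i0).map fun l => l.2.2).flatten.length = i0 := by
    rw [flatten_len_singles _ (fun l hl => hl1 l (List.mem_of_mem_take hl))]
    simp
    omega
  have hT1 : ((ls.take i0).map fun l => l.2.2).flatten = replicate i0 a := by
    have hmem' : ∀ x ∈ ((ls.take i0).map fun l => l.2.2).flatten, x = a := by
      intro x hx
      exact List.eq_of_mem_replicate (hTMsplit ▸ List.mem_append_left _ hx)
    have := List.eq_replicate_of_mem hmem'
    rwa [hlenT1] at this
  have hM : (mid.map fun l => l.2.2).flatten = replicate (j0 - i0) a := by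
    have hmem' : ∀ x ∈ (mid.map fun l => l.2.2).flatten, x = a := by
      intro x hx
      exact List.eq_of_mem_replicate (hTMsplit ▸ List.mem_append_right _ hx)
    have hlenM : (mid.map fun l => l.2.2).flatten.length = j0 - i0 := by
      have := congrArg List.length hTMsplit
      simp only [List.length_append, hlenT1, List.length_replicate] at this
      omega
    have := List.eq_replicate_of_mem hmem'
    rwa [hlenM] at this
  -- assemble
  have h3' : (prodTriple (ls.take i0 ++ (mid ++ (mid ++ ls.drop j0)))).2.2 =
      replicate (s + (j0 - i0)) a ++ [b] ++ replicate (2 * s) a ++ [b] ++ replicate s a := by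
    show ((ls.take i0 ++ (mid ++ (mid ++ ls.drop j0))).map fun l => l.2.2).flatten = _
    rw [List.map_append, List.map_append, List.map_append, List.flatten_append,
      List.flatten_append, List.flatten_append, hT1, hM, hT3]
    simp only [← List.append_assoc, ← List.replicate_add]
    rw [show i0 + (j0 - i0 + (j0 - i0 + (s - j0))) = s + (j0 - i0) by omega]
  have e3 : (prodTriple (ls.take i0 ++ (mid ++ (mid ++ ls.drop j0)))).2.2 =
      replicate t a ++ [b] ++ replicate (2 * t) a ++ [b] ++ replicate t a :=
    congrArg (Prod.snd ∘ Prod.snd) hform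
  rw [h3'] at e3
  simp only [List.append_assoc, List.singleton_append] at e3
  obtain ⟨he1, e3'⟩ := rep_b_split hab _ _ _ _ e3
  obtain ⟨he2, _⟩ := rep_b_split hab _ _ _ _ e3'
  omega

end SpliffAux
/-- over `A = {a,b}`, there are deterministic splitters `S₁`, `S₂`
with behaviors `L₁` and `L₂` such that `|S₁| ∩ |S₂|` is not the behavior of any
spliffer: behaviors of (deterministic) splitters are not closed under
intersection. -/
theorem not_closed_under_intersection {A : Type} (a b : A) (hab : a ≠ b)
    (hA : ∀ x : A, x = a ∨ x = b) :
    ∃ S₁ S₂ : Spliffer A, S₁.Deterministic ∧ S₂.Deterministic ∧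
      S₁.behavior = setL1 a b ∧ S₂.behavior = setL2 a b ∧
      S₁.behavior ∩ S₂.behavior = setLcap a b ∧
      ¬ ∃ S : Spliffer A, S.behavior = S₁.behavior ∩ S₂.behavior := by
  refine ⟨SpliffAux.Sone a b, SpliffAux.swapS (SpliffAux.Sone a b),
    SpliffAux.Sone_det hab, SpliffAux.swapS_det (SpliffAux.Sone_det hab),
    SpliffAux.Sone_behavior, SpliffAux.Stwo_behavior, ?_, ?_⟩
  · rw [SpliffAux.Sone_behavior, SpliffAux.Stwo_behavior]
    exact SpliffAux.L1_inter_L2 hab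
  · rw [SpliffAux.Sone_behavior, SpliffAux.Stwo_behavior, SpliffAux.L1_inter_L2 hab]
    exact SpliffAux.no_spliffer_Lcap hab
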